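/- Let L be a graph Laplacian, k a vertex with ℓ_{kk} > 0, and L^{(k)} = Σ_{i ∈ N_k} (−ℓ_{ki}) b_{ki} b_{ki}^T. Then L^{(k)} − (1/ℓ_{kk}) L(:,k) L(k,:) = (1/2) Σ_{i,j ∈ N_k} (ℓ_{ki} ℓ_{kj} / ℓ_{kk}) b_{ij} b_{ij}^T; in particular, the Schur complement of the star around k is the Laplacian of the clique on the neighbors of k with edge weight ℓ_{ki}ℓ_{kj}/ℓ_{kk} between neighbors i and j. -/

import Mathlib

open Matrix Finset

/-- The vector `b_{ij} = e_i - e_j` in `ℝ^N`. -/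
noncomputable def stdb {N : ℕ} (i j : Fin N) : Fin N → ℝ :=
  fun k => (if k = i then (1 : ℝ) else 0) - (if k = j then (1 : ℝ) else 0)

/-- The graph Laplacian `L = ∑_{i<j} w_{ij} b_{ij} b_{ij}ᵀ` of the weighted graph with
weight `w i j` on the (undirected) edge `{i,j}` (`w i j = 0` meaning no edge). -/
noncomputable def lap {N : ℕ} (w : Fin N → Fin N → ℝ) : Matrix (Fin N) (Fin N) ℝ :=
  ∑ p : Fin N × Fin N,
    if p.1 < p.2 then w p.1 p.2 • Matrix.vecMulVec (stdb p.1 p.2) (stdb p.1 p.2) else 0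

lemma key {ι : Type*} (s : Finset ι) (w p q : ι → ℝ) (α β c : ℝ) (hc : c ≠ 0)
    (hS : ∑ i ∈ s, w i = -c) :
    (∑ i ∈ s, -(w i) * ((α - p i) * (β - q i)))
      - c⁻¹ * ((∑ i ∈ s, -(w i) * (α - p i)) * (∑ i ∈ s, -(w i) * (β - q i)))
    = 1/2 * ∑ i ∈ s, ∑ j ∈ s, (w i * w j / c) * ((p i - p j) * (q i - q j)) := by
  set S := ∑ i ∈ s, w i with hSdef
  set A := ∑ i ∈ s, w i * p i with hA
  set B := ∑ i ∈ s, w i * q i with hB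
  set C := ∑ i ∈ s, w i * (p i * q i) with hC
  have h1 : (∑ i ∈ s, -(w i) * ((α - p i) * (β - q i)))
      = -(α*β) * S + α * B + β * A - C := by
    rw [Finset.sum_congr rfl (fun i _ => (by ring :
      -(w i) * ((α - p i) * (β - q i)) =
        -(α*β) * w i + α * (w i * q i) + β * (w i * p i) - w i * (p i * q i)))]
    simp only [Finset.sum_add_distrib, Finset.sum_sub_distrib, ← Finset.mul_sum]
    rfl
  have h2 : (∑ i ∈ s, -(w i) * (α - p i)) = -(α * S) + A := by
    rw [Finset.sum_congr rfl (fun i _ => (by ring :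
      -(w i) * (α - p i) = -(α * w i) + w i * p i))]
    simp only [Finset.sum_add_distrib, Finset.sum_neg_distrib, ← Finset.mul_sum]
    rfl
  have h3 : (∑ i ∈ s, -(w i) * (β - q i)) = -(β * S) + B := by
    rw [Finset.sum_congr rfl (fun i _ => (by ring :
      -(w i) * (β - q i) = -(β * w i) + w i * q i))]
    simp only [Finset.sum_add_distrib, Finset.sum_neg_distrib, ← Finset.mul_sum]
    rfl
  have h4 : (∑ i ∈ s, ∑ j ∈ s, (w i * w j / c) * ((p i - p j) * (q i - q j)))
      = (2 * S * C - 2 * A * B) / c := by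
    have inner : ∀ i ∈ s, (∑ j ∈ s, (w i * w j / c) * ((p i - p j) * (q i - q j)))
        = ((w i * (p i * q i)) * S - (w i * p i) * B - (w i * q i) * A + w i * C) / c := by
      intro i _
      rw [Finset.sum_congr rfl (fun j _ => (by field_simp; ring :
        (w i * w j / c) * ((p i - p j) * (q i - q j)) =
          ((w i * (p i * q i)) * w j - (w i * p i) * (w j * q j)
            - (w i * q i) * (w j * p j) + w i * (w j * (p j * q j))) / c))]
      rw [← Finset.sum_div]
      congr 1
      simp only [Finset.sum_add_distrib, Finset.sum_sub_distrib, ← Finset.mul_sum]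
      rfl
    rw [Finset.sum_congr rfl inner]
    rw [← Finset.sum_div]
    congr 1
    simp only [Finset.sum_add_distrib, Finset.sum_sub_distrib, ← Finset.sum_mul, ← Finset.mul_sum]
    ring
  rw [h1, h2, h3, h4, hS]
  field_simp
  ring

theorem stmt_7 {N : ℕ} (L : Matrix (Fin N) (Fin N) ℝ) (k : Fin N)
    (Nk : Finset (Fin N)) (hNk : Nk = Finset.univ.filter (fun j => L k j ≠ 0 ∧ j ≠ k))
    (Lk : Matrix (Fin N) (Fin N) ℝ)
    (hLk : Lk = ∑ i ∈ Nk, (-(L k i)) • Matrix.vecMulVec (stdb k i) (stdb k i))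
    (hkk : L k k = -∑ i ∈ Nk, L k i) (hkkpos : 0 < L k k)
    (hcol : ∀ a, L a k = Lk a k) (hrow : ∀ a, L k a = Lk k a) :
    Lk - (L k k)⁻¹ • Matrix.vecMulVec (fun a => L a k) (fun a => L k a) =
      (1 / 2 : ℝ) • ∑ i ∈ Nk, ∑ j ∈ Nk,
        ((L k i * L k j) / L k k) • Matrix.vecMulVec (stdb i j) (stdb i j) := by

  have hc : L k k ≠ 0 := ne_of_gt hkkpos
  have hkNk : ∀ i ∈ Nk, stdb k i k = 1 := by
    intro i hi
    rw [hNk] at hi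
    simp only [Finset.mem_filter] at hi
    simp [stdb, Ne.symm hi.2.2]
  ext a b
  have hcol' := hcol a
  have hrow' := hrow b
  rw [hLk] at hcol' hrow' ⊢
  simp only [Matrix.sub_apply, Matrix.smul_apply, Matrix.sum_apply,
    Matrix.vecMulVec_apply, smul_eq_mul] at hcol' hrow' ⊢
  rw [hcol', hrow']
  have c1 : (∑ i ∈ Nk, -L k i * (stdb k i a * stdb k i k)) =
      ∑ i ∈ Nk, -(L k i) * ((if a = k then (1:ℝ) else 0) - (if a = i then (1:ℝ) else 0)) := by
    refine Finset.sum_congr rfl fun i hi => ?_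
    rw [hkNk i hi, mul_one]
    simp [stdb]
  have c2 : (∑ i ∈ Nk, -L k i * (stdb k i k * stdb k i b)) =
      ∑ i ∈ Nk, -(L k i) * ((if b = k then (1:ℝ) else 0) - (if b = i then (1:ℝ) else 0)) := by
    refine Finset.sum_congr rfl fun i hi => ?_
    rw [hkNk i hi, one_mul]
    simp [stdb]
  rw [c1, c2]
  simp only [stdb]
  exact key Nk (fun i => L k i) (fun i => if a = i then (1:ℝ) else 0)
    (fun i => if b = i then (1:ℝ) else 0) (if a = k then (1:ℝ) else 0)
    (if b = k then (1:ℝ) else 0) (L k k) hc (by rw [hkk, neg_neg])
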